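/- Let F be a field equipped with a family of non-trivial non-archimedean absolute values |·|_v (v ∈ M_F) satisfying a product formula, with field of constants K̄ = {α ∈ F̄ : |α|_v ≤ 1 for all extensions of all v}. Let f ∈ F[z] be monic of degree d ≥ 2. If ρ_v(f) = 1 for all v ∈ M_F (where ρ_v(f) = max over roots ζ₁, ζ₂ of f of max(|ζ₁ − ζ₂|_v, 1)), then there exists α ∈ F̄ such that f(z + α) has all coefficients in K̄. -/

import Mathlib

open Polynomial

/-- A nonarchimedean absolute value is at most 1 on natural numbers. -/
lemma natCast_le_one_of_isNonarchimedean {F : Type*} [Field F]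
    (v : AbsoluteValue F ℝ) (hna : IsNonarchimedean v) (n : ℕ) : v n ≤ 1 := by
  induction n with
  | zero => simp
  | succ k ih =>
    push_cast
    refine (hna (k : F) 1).trans ?_
    simp [ih]

/-- An absolute value bounded by 1 on ℕ is nonarchimedean. -/
lemma isNonarchimedean_of_natCast_le_one {K : Type*} [Field K]
    (w : AbsoluteValue K ℝ) (h : ∀ n : ℕ, w n ≤ 1) : IsNonarchimedean w := by
  intro x y
  set M : ℝ := max (w x) (w y) with hMdef
  have hM0 : 0 ≤ M := le_trans (w.nonneg x) (le_max_left _ _)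
  have key : ∀ n : ℕ, w (x + y) ^ n ≤ (n + 1 : ℝ) * M ^ n := by
    intro n
    have hx : w x ≤ M := le_max_left _ _
    have hy : w y ≤ M := le_max_right _ _
    calc w (x + y) ^ n = w ((x + y) ^ n) := (map_pow w _ _).symm
      _ = w (∑ k ∈ Finset.range (n + 1), x ^ k * y ^ (n - k) * (n.choose k : K)) := by
          rw [add_pow]
      _ ≤ ∑ k ∈ Finset.range (n + 1), w (x ^ k * y ^ (n - k) * (n.choose k : K)) :=
          w.sum_le _ _
      _ ≤ ∑ _k ∈ Finset.range (n + 1), M ^ n := by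
          refine Finset.sum_le_sum fun k hk => ?_
          rw [map_mul, map_mul, map_pow, map_pow]
          have hkn : k ≤ n := Nat.lt_succ_iff.mp (Finset.mem_range.mp hk)
          have h1 : w x ^ k * w y ^ (n - k) ≤ M ^ k * M ^ (n - k) :=
            mul_le_mul (pow_le_pow_left₀ (w.nonneg x) hx k)
              (pow_le_pow_left₀ (w.nonneg y) hy (n - k))
              (pow_nonneg (w.nonneg y) _) (pow_nonneg hM0 _)
          have h2 : M ^ k * M ^ (n - k) = M ^ n := by
            rw [← pow_add, Nat.add_sub_cancel' hkn]
          calc w x ^ k * w y ^ (n - k) * w (n.choose k : K)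
              ≤ w x ^ k * w y ^ (n - k) * 1 := by
                refine mul_le_mul_of_nonneg_left (h _) ?_
                positivity
            _ = w x ^ k * w y ^ (n - k) := mul_one _
            _ ≤ M ^ n := h2 ▸ h1
      _ = (n + 1 : ℝ) * M ^ n := by
          rw [Finset.sum_const, Finset.card_range, nsmul_eq_mul]
          push_cast; ring
  by_contra hlt
  push_neg at hlt
  have ht0 : 0 < w (x + y) := lt_of_le_of_lt hM0 hlt
  set t : ℝ := w (x + y)
  set q : ℝ := M / t with hq
  have hq0 : 0 ≤ q := div_nonneg hM0 ht0.le
  have hq1 : q < 1 := (div_lt_one ht0).mpr hlt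
  have hone : ∀ n : ℕ, (1 : ℝ) ≤ (n + 1 : ℝ) * q ^ n := by
    intro n
    have := key n
    have htn : 0 < t ^ n := pow_pos ht0 n
    rw [hq, div_pow]
    have heq : ((n : ℝ) + 1) * (M ^ n / t ^ n) = ((n : ℝ) + 1) * M ^ n / t ^ n := by ring
    rw [heq, le_div_iff₀ htn, one_mul]
    exact this
  have htend : Filter.Tendsto (fun n : ℕ => ((n : ℝ) + 1) * q ^ n)
      Filter.atTop (nhds 0) := by
    have h1 := tendsto_self_mul_const_pow_of_lt_one hq0 hq1
    have h2 := tendsto_pow_atTop_nhds_zero_of_lt_one hq0 hq1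
    have := h1.add h2
    simpa [add_mul] using this
  have h10 : (1 : ℝ) ≤ 0 := ge_of_tendsto' htend hone
  linarith

/-- Coefficients of a product of `X - r` with all `|r| ≤ 1` are bounded by 1. -/
lemma coeff_prod_X_sub_C_le_one {K : Type*} [Field K]
    (w : AbsoluteValue K ℝ) (hna : IsNonarchimedean w) (s : Multiset K)
    (hs : ∀ r ∈ s, w r ≤ 1) (n : ℕ) :
    w ((s.map fun r => X - C r).prod.coeff n) ≤ 1 := by
  induction s using Multiset.induction_on generalizing n with
  | empty =>
    simp only [Multiset.map_zero, Multiset.prod_zero, coeff_one]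
    split <;> simp
  | cons a s ih =>
    have ha : w a ≤ 1 := hs a (Multiset.mem_cons_self a s)
    have hs' : ∀ r ∈ s, w r ≤ 1 := fun r hr => hs r (Multiset.mem_cons_of_mem hr)
    rw [Multiset.map_cons, Multiset.prod_cons]
    set Q := (s.map fun r => X - C r).prod with hQ
    have hexp : ((X - C a) * Q).coeff n =
        (X * Q).coeff n - a * Q.coeff n := by
      rw [sub_mul, coeff_sub, coeff_C_mul]
    rw [hexp]
    have hXQ : w ((X * Q).coeff n) ≤ 1 := by
      cases n with
      | zero => simp [mul_coeff_zero]
      | succ m => rw [coeff_X_mul]; exact ih hs' m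
    have haQ : w (a * Q.coeff n) ≤ 1 := by
      rw [map_mul]
      exact mul_le_one₀ ha (w.nonneg _) (ih hs' n)
    have := hna ((X * Q).coeff n) (-(a * Q.coeff n))
    rw [← sub_eq_add_neg] at this
    refine this.trans (max_le ?_ ?_)
    · exact hXQ
    · rw [w.map_neg]; exact haQ

/-- over a function field `F` (product formula field with
non-archimedean places), if `ρ_v(f) = 1` for all places `v` (all roots of `f` are
at mutual distance ≤ 1 at every place of the algebraic closure), then some
translate `f(z + α)` has all coefficients in the constant field
`{α : |α|_w ≤ 1 for all w}`. -/
theorem stmt11 {F : Type*} [Field F] {ι : Type*}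
    (v : ι → AbsoluteValue F ℝ) (hna : ∀ i, IsNonarchimedean (v i))
    (hnontriv : ∀ i, ∃ x : F, x ≠ 0 ∧ v i x ≠ 1)
    (hprod : ∀ x : F, x ≠ 0 →
      (Function.mulSupport fun i => v i x).Finite ∧ ∏ᶠ i, v i x = 1)
    {L : Type*} [Field L] [Algebra F L] [IsAlgClosure F L]
    (w : ι → AbsoluteValue L ℝ)
    (hw : ∀ (i) (x : F), w i (algebraMap F L x) = v i x)
    (d : ℕ) (hd : 2 ≤ d) (f : F[X]) (hmonic : f.Monic) (hdeg : f.natDegree = d)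
    (hρ : ∀ (i) (ζ₁ ζ₂ : L), (f.map (algebraMap F L)).eval ζ₁ = 0 →
      (f.map (algebraMap F L)).eval ζ₂ = 0 → w i (ζ₁ - ζ₂) ≤ 1) :
    ∃ α : L, ∀ (n : ℕ) (i : ι),
      w i (((f.map (algebraMap F L)).comp (X + C α)).coeff n) ≤ 1 := by
  haveI : IsAlgClosed L := IsAlgClosure.isAlgClosed F
  set g₀ : L[X] := f.map (algebraMap F L) with hg₀
  have hg₀monic : g₀.Monic := hmonic.map _
  have hg₀deg : g₀.natDegree = d := by
    rw [hg₀, natDegree_map, hdeg]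
  have hdegne : g₀.degree ≠ 0 := by
    rw [degree_eq_natDegree hg₀monic.ne_zero, hg₀deg]
    exact_mod_cast (by omega : d ≠ 0)
  obtain ⟨α, hα⟩ := IsAlgClosed.exists_root g₀ hdegne
  refine ⟨α, fun n i => ?_⟩
  set g : L[X] := g₀.comp (X + C α) with hg
  have hgmonic : g.Monic := hg₀monic.comp_X_add_C α
  have hgsplits : g.Splits := IsAlgClosed.splits g
  have hgeq : g = (g.roots.map fun a => X - C a).prod :=
    hgsplits.eq_prod_roots_of_monic hgmonic
  have hαroot : g₀.eval α = 0 := hα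
  have hroots : ∀ r ∈ g.roots, w i r ≤ 1 := by
    intro r hr
    have hgne : g ≠ 0 := hgmonic.ne_zero
    have hreval : g.eval r = 0 := (mem_roots hgne).mp hr
    have hreval' : g₀.eval (r + α) = 0 := by
      rw [hg] at hreval
      simpa [eval_comp] using hreval
    have := hρ i (r + α) α hreval' hαroot
    simpa using this
  have hwna : IsNonarchimedean (w i) := by
    apply isNonarchimedean_of_natCast_le_one
    intro n
    have hcast : (n : L) = algebraMap F L (n : F) := by simp
    rw [hcast, hw]
    exact natCast_le_one_of_isNonarchimedean (v i) (hna i) n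
  have := coeff_prod_X_sub_C_le_one (w i) hwna g.roots hroots n
  rwa [← hgeq] at this
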